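/- Let A be an r×r symmetrizable generalized Cartan matrix. For each (i,m) ∈ [1,r]×ℤ there is a unique cluster-additive function h_{(i,m)} associated to A (the cluster-hammock function) such that h_{(i,m)}(j,m) = -δ_{j,i} for all j ∈ [1,r], where δ_{j,i} is the Kronecker delta. -/

import Mathlib

open Finset

/-- An `r × r` symmetrizable generalized Cartan matrix. -/
def IsSGCM {r : ℕ} (A : Matrix (Fin r) (Fin r) ℤ) : Prop :=
  (∀ i, A i i = 2) ∧ (∀ i j, i ≠ j → A i j ≤ 0) ∧
    ∃ D : Fin r → ℤ, (∀ i, 0 < D i) ∧ ∀ i j, D i * A i j = D j * A j i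

/-- A cluster-additive function associated to `A`. -/
def ClusterAdditive {r : ℕ} (A : Matrix (Fin r) (Fin r) ℤ) (k : Fin r → ℤ → ℤ) : Prop :=
  ∀ (i : Fin r) (m : ℤ),
    k i m + k i (m + 1) =
      (∑ j ∈ Finset.univ.filter (fun j => i < j), (-(A j i)) * max (k j m) 0) +
        ∑ j ∈ Finset.univ.filter (fun j => j < i), (-(A j i)) * max (k j (m + 1)) 0

/-- A tropical frieze associated to `A`. -/
def TropicalFrieze {r : ℕ} (A : Matrix (Fin r) (Fin r) ℤ) (f : Fin r → ℤ → ℤ) : Prop :=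
  ∀ (i : Fin r) (m : ℤ),
    f i m + f i (m + 1) =
      max ((∑ j ∈ Finset.univ.filter (fun j => i < j), (-(A j i)) * f j m) +
        ∑ j ∈ Finset.univ.filter (fun j => j < i), (-(A j i)) * f j (m + 1)) 0

section Aux
variable {r : ℕ} (A : Matrix (Fin r) (Fin r) ℤ)

/-- The relation between two consecutive slices of a cluster-additive function. -/
def CARel (v w : Fin r → ℤ) : Prop :=
  ∀ i : Fin r, v i + w i =
    (∑ j ∈ Finset.univ.filter (fun j => i < j), (-(A j i)) * max (v j) 0) +
      ∑ j ∈ Finset.univ.filter (fun j => j < i), (-(A j i)) * max (w j) 0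

def nextSlice (v : Fin r → ℤ) : Fin r → ℤ
  | i =>
    (∑ j ∈ Finset.univ.filter (fun j => i < j), (-(A j i)) * max (v j) 0) +
      (∑ j ∈ (Finset.univ.filter (fun j => j < i)).attach,
        (-(A j.1 i)) * max (nextSlice v j.1) 0) - v i
  termination_by i => i.1
  decreasing_by exact (Finset.mem_filter.mp j.2).2

lemma nextSlice_def (v : Fin r → ℤ) (i : Fin r) :
    nextSlice A v i =
      (∑ j ∈ Finset.univ.filter (fun j => i < j), (-(A j i)) * max (v j) 0) +
        (∑ j ∈ Finset.univ.filter (fun j => j < i),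
          (-(A j i)) * max (nextSlice A v j) 0) - v i := by
  rw [nextSlice]
  rw [Finset.sum_attach (Finset.univ.filter (fun j => j < i))
    (fun j => (-(A j i)) * max (nextSlice A v j) 0)]

def prevSlice (w : Fin r → ℤ) : Fin r → ℤ
  | i =>
    (∑ j ∈ (Finset.univ.filter (fun j => i < j)).attach,
        (-(A j.1 i)) * max (prevSlice w j.1) 0) +
      (∑ j ∈ Finset.univ.filter (fun j => j < i), (-(A j i)) * max (w j) 0) - w i
  termination_by i => r - i.1
  decreasing_by
    have h1 : i < j.1 := (Finset.mem_filter.mp j.2).2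
    have h2 := j.1.isLt
    have h3 : i.1 < j.1.1 := h1
    omega

lemma prevSlice_def (w : Fin r → ℤ) (i : Fin r) :
    prevSlice A w i =
      (∑ j ∈ Finset.univ.filter (fun j => i < j),
          (-(A j i)) * max (prevSlice A w j) 0) +
        (∑ j ∈ Finset.univ.filter (fun j => j < i), (-(A j i)) * max (w j) 0) - w i := by
  rw [prevSlice]
  rw [Finset.sum_attach (Finset.univ.filter (fun j => i < j))
    (fun j => (-(A j i)) * max (prevSlice A w j) 0)]

lemma carel_next_self (v : Fin r → ℤ) : CARel A v (nextSlice A v) := by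
  intro i
  rw [nextSlice_def]
  ring

lemma carel_prev_self (w : Fin r → ℤ) : CARel A (prevSlice A w) w := by
  intro i
  rw [prevSlice_def]
  ring

lemma carel_eq_next {v w : Fin r → ℤ} (h : CARel A v w) : w = nextSlice A v := by
  have key : ∀ n : ℕ, ∀ i : Fin r, i.1 = n → w i = nextSlice A v i := by
    intro n
    induction n using Nat.strong_induction_on with
    | _ n ih =>
      intro i hi
      have h1 := h i
      have h2 : ∑ j ∈ Finset.univ.filter (fun j => j < i), (-(A j i)) * max (w j) 0
          = ∑ j ∈ Finset.univ.filter (fun j => j < i),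
              (-(A j i)) * max (nextSlice A v j) 0 := by
        refine Finset.sum_congr rfl fun j hj => ?_
        have hj' : j < i := (Finset.mem_filter.mp hj).2
        have hj'' : j.1 < n := by omega
        rw [ih j.1 hj'' j rfl]
      rw [h2] at h1
      rw [nextSlice_def]
      linarith
  funext i
  exact key i.1 i rfl

lemma carel_eq_prev {v w : Fin r → ℤ} (h : CARel A v w) : v = prevSlice A w := by
  have key : ∀ n : ℕ, ∀ i : Fin r, r - i.1 = n → v i = prevSlice A w i := by
    intro n
    induction n using Nat.strong_induction_on with
    | _ n ih =>
      intro i hi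
      have h1 := h i
      have h2 : ∑ j ∈ Finset.univ.filter (fun j => i < j), (-(A j i)) * max (v j) 0
          = ∑ j ∈ Finset.univ.filter (fun j => i < j),
              (-(A j i)) * max (prevSlice A w j) 0 := by
        refine Finset.sum_congr rfl fun j hj => ?_
        have hj' : i < j := (Finset.mem_filter.mp hj).2
        have hjl := j.isLt
        have hj3 : i.1 < j.1 := hj'
        have hj'' : r - j.1 < n := by omega
        rw [ih (r - j.1) hj'' j rfl]
      rw [h2] at h1
      rw [prevSlice_def]
      linarith
  funext i
  exact key (r - i.1) i rfl

lemma next_prev (w : Fin r → ℤ) : nextSlice A (prevSlice A w) = w :=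
  (carel_eq_next A (carel_prev_self A w)).symm

lemma prev_next (v : Fin r → ℤ) : prevSlice A (nextSlice A v) = v :=
  (carel_eq_prev A (carel_next_self A v)).symm

def slices (v0 : Fin r → ℤ) : ℤ → Fin r → ℤ
  | Int.ofNat n => (nextSlice A)^[n] v0
  | Int.negSucc n => (prevSlice A)^[n + 1] v0

lemma slices_zero (v0 : Fin r → ℤ) : slices A v0 0 = v0 := rfl

lemma slices_succ (v0 : Fin r → ℤ) (d : ℤ) :
    slices A v0 (d + 1) = nextSlice A (slices A v0 d) := by
  cases d with
  | ofNat n =>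
    show slices A v0 (Int.ofNat (n + 1)) = _
    show (nextSlice A)^[n + 1] v0 = _
    rw [Function.iterate_succ_apply']
    rfl
  | negSucc n =>
    cases n with
    | zero =>
      show slices A v0 0 = _
      rw [slices_zero]
      show v0 = nextSlice A ((prevSlice A)^[1] v0)
      rw [Function.iterate_one, next_prev]
    | succ k =>
      show slices A v0 (Int.negSucc k) = _
      show (prevSlice A)^[k + 1] v0 = nextSlice A ((prevSlice A)^[k + 2] v0)
      rw [show (prevSlice A)^[k + 2] v0 = prevSlice A ((prevSlice A)^[k + 1] v0) from
        Function.iterate_succ_apply' _ _ _, next_prev]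

lemma slices_pred (v0 : Fin r → ℤ) (d : ℤ) :
    slices A v0 (d - 1) = prevSlice A (slices A v0 d) := by
  have h := slices_succ A v0 (d - 1)
  rw [sub_add_cancel] at h
  rw [h, prev_next]

end Aux


/-- For every `(i, m)` there is a unique cluster-additive function `h_(i,m)` associated to `A`
(the cluster-hammock function) with `h_(i,m)(j, m) = -δ_{j,i}` for all `j`. -/
theorem cluster_hammock_exists_unique {r : ℕ} (A : Matrix (Fin r) (Fin r) ℤ)
    (hA : IsSGCM A) (i : Fin r) (m : ℤ) :
    ∃! h : Fin r → ℤ → ℤ, ClusterAdditive A h ∧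
      ∀ j : Fin r, h j m = if j = i then -1 else 0 := by
  set v0 : Fin r → ℤ := fun j => if j = i then -1 else 0 with hv0
  refine ⟨fun j n => slices A v0 (n - m) j, ⟨?_, ?_⟩, ?_⟩
  · intro i' n
    have e : n + 1 - m = (n - m) + 1 := by ring
    have key := carel_next_self A (slices A v0 (n - m)) i'
    rw [← slices_succ A v0 (n - m)] at key
    dsimp only
    rw [e]
    exact key
  · intro j
    show slices A v0 (m - m) j = _
    rw [sub_self, slices_zero]
  · intro g ⟨hg, hgm⟩
    have key : ∀ d : ℤ, (fun j => g j (m + d)) = slices A v0 d := by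
      intro d
      induction d using Int.induction_on with
      | zero =>
        rw [slices_zero]
        funext j
        rw [add_zero]
        exact hgm j
      | succ d ihd =>
        have hrel : CARel A (fun j => g j (m + d)) (fun j => g j (m + d + 1)) :=
          fun i' => hg i' (m + d)
        have h1 := carel_eq_next A hrel
        rw [slices_succ, ← ihd, ← h1]
        funext j
        rw [show m + (d + 1) = m + d + 1 by ring]
      | pred d ihd =>
        have e : m + (-d - 1) + 1 = m + -d := by ring
        have hrel : CARel A (fun j => g j (m + (-d - 1))) (fun j => g j (m + -d)) := by
          intro i'
          have := hg i' (m + (-d - 1))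
          rw [e] at this
          exact this
        have h1 := carel_eq_prev A hrel
        rw [show (-d - 1 : ℤ) = -d - 1 from rfl, slices_pred, ← ihd, ← h1]
    funext j n
    have h1 := congrFun (key (n - m)) j
    rw [show m + (n - m) = n by ring] at h1
    exact h1
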